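/- There exist constants δ₀ ∈ (0,1) and C ≥ 1 with the following property. Let ⟨v,w⟩ = −v⁰w⁰ + v¹w¹ + v²w² + v³w³ denote the Minkowski inner product on ℝ⁴. Let 0 < ε ≤ δ₀ and let X, Y₁, Y₂ ∈ ℝ⁴ satisfy 1/2 ≤ max_α |X^α| ≤ 2 and 1/2 ≤ max_α |Y_A^α| ≤ 2 for A = 1,2, together with |⟨X,X⟩| ≤ ε², |⟨X,Y_A⟩| ≤ ε for A = 1,2, and |⟨Y_A,Y_B⟩ − δ_{AB}| ≤ δ₀ for A,B = 1,2. Then there exist vectors L, L̲, e₁, e₂ ∈ ℝ⁴ and real coefficients γ, c_X^1, c_X^2, c_A^B (A,B = 1,2) such that ⟨L,L⟩ = ⟨L̲,L̲⟩ = 0, ⟨L,L̲⟩ = −1, ⟨L,e_A⟩ = ⟨L̲,e_A⟩ = 0, ⟨e_A,e_B⟩ = δ_{AB}, and X = L + c_X^1 e₁ + c_X^2 e₂ + γ L̲, Y_A = c_A^1 e₁ + c_A^2 e₂, with the quantitative bounds |γ| ≤ C ε², |c_X^A| ≤ C ε, and |c_A^B − δ_A^B| ≤ 1/2. -/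

import Mathlib

noncomputable section

/-- The Minkowski inner product on `ℝ⁴`: `⟨v,w⟩ = -v⁰w⁰ + v¹w¹ + v²w² + v³w³`. -/
def mink (v w : Fin 4 → ℝ) : ℝ :=
  -(v 0 * w 0) + v 1 * w 1 + v 2 * w 2 + v 3 * w 3

section Helpers
set_option linter.unusedVariables false

lemma mink_eq (v w : Fin 4 → ℝ) :
    mink v w = -(v 0 * w 0) + v 1 * w 1 + v 2 * w 2 + v 3 * w 3 := rfl
lemma mink_comm (v w : Fin 4 → ℝ) : mink v w = mink w v := by simp [mink]; ring
lemma mink_add_left (u v w : Fin 4 → ℝ) : mink (u + v) w = mink u w + mink v w := by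
  simp [mink, Pi.add_apply]; ring
lemma mink_sub_left (u v w : Fin 4 → ℝ) : mink (u - v) w = mink u w - mink v w := by
  simp [mink, Pi.sub_apply]; ring
lemma mink_smul_left (c : ℝ) (u w : Fin 4 → ℝ) : mink (c • u) w = c * mink u w := by
  simp [mink, Pi.smul_apply, smul_eq_mul]; ring
lemma mink_add_right (u v w : Fin 4 → ℝ) : mink u (v + w) = mink u v + mink u w := by
  simp [mink, Pi.add_apply]; ring
lemma mink_sub_right (u v w : Fin 4 → ℝ) : mink u (v - w) = mink u v - mink u w := by
  simp [mink, Pi.sub_apply]; ring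
lemma mink_smul_right (c : ℝ) (u w : Fin 4 → ℝ) : mink u (c • w) = c * mink u w := by
  simp [mink, Pi.smul_apply, smul_eq_mul]; ring

lemma aux_spacelike (T0 T1 T2 T3 v0 v1 v2 v3 : ℝ)
    (hT : -(T0*T0) + T1*T1 + T2*T2 + T3*T3 = -1)
    (ho : -(v0*T0) + v1*T1 + v2*T2 + v3*T3 = 0) :
    v1^2 + v2^2 + v3^2 ≤ T0^2 * (-(v0*v0) + v1*v1 + v2*v2 + v3*v3)
    ∧ v0^2 ≤ v1^2 + v2^2 + v3^2 := by
  have key : T0^2 * (-(v0*v0) + v1*v1 + v2*v2 + v3*v3) - (v1^2 + v2^2 + v3^2)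
      = (v1*T2 - v2*T1)^2 + (v1*T3 - v3*T1)^2 + (v2*T3 - v3*T2)^2 := by
    linear_combination (-(v1^2+v2^2+v3^2)) * hT + (v0*T0 + v1*T1+v2*T2+v3*T3) * ho
  constructor
  · nlinarith [sq_nonneg (v1*T2 - v2*T1), sq_nonneg (v1*T3 - v3*T1), sq_nonneg (v2*T3 - v3*T2)]
  · nlinarith [sq_nonneg (v1*T2 - v2*T1), sq_nonneg (v1*T3 - v3*T1), sq_nonneg (v2*T3 - v3*T2),
      sq_nonneg T0, sq_nonneg v0, sq_nonneg (T0*v0)]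

lemma sqrt_lb (r a : ℝ) (hr : 0 ≤ r) (ha : 0 ≤ a) (h : a^2 ≤ r^2) : a ≤ r := by nlinarith
lemma sqrt_ub (r b : ℝ) (hr : 0 ≤ r) (hb : 0 ≤ b) (h : r^2 ≤ b^2) : r ≤ b := by nlinarith
lemma abs_mul_le' (x y a b : ℝ) (hx : |x| ≤ a) (hy : |y| ≤ b) : |x*y| ≤ a*b := by
  rw [abs_mul]; exact mul_le_mul hx hy (abs_nonneg _) ((abs_nonneg x).trans hx)
lemma sq_le_of_abs (x a : ℝ) (h : |x| ≤ a) : x^2 ≤ a^2 := by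
  rw [← sq_abs]; exact pow_le_pow_left₀ (abs_nonneg x) h 2
lemma sq_ge_of_abs (x a : ℝ) (ha : 0 ≤ a) (h : a ≤ |x|) : a^2 ≤ x^2 := by
  have h2 := pow_le_pow_left₀ ha h 2
  rwa [sq_abs] at h2
lemma tri2_lower (x u v : ℝ) : |x| - |u| - |v| ≤ |x - u - v| := by
  have h2 : |((x - u - v) + u) + v| ≤ |(x - u - v) + u| + |v| := abs_add_le _ _
  have h1 : |(x - u - v) + u| ≤ |x - u - v| + |u| := abs_add_le _ _
  have h3 : ((x - u - v) + u) + v = x := by ring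
  rw [h3] at h2; linarith
lemma tri2_upper (x u v : ℝ) : |x - u - v| ≤ |x| + |u| + |v| := by
  have h1 : |x - u| ≤ |x| + |u| := abs_sub x u
  have h2 : |(x - u) - v| ≤ |x - u| + |v| := abs_sub _ _
  have h3 : (x - u) - v = x - u - v := by ring
  rw [h3] at h2; linarith
lemma tri2_upper' (x u v : ℝ) : |x + u + v| ≤ |x| + |u| + |v| := by
  have h1 : |x + u| ≤ |x| + |u| := abs_add_le x u
  have h2 : |(x + u) + v| ≤ |x + u| + |v| := abs_add_le _ _
  linarith
lemma tri1_lower (x u : ℝ) : |x| - |u| ≤ |x + u| := by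
  have h2 : |(x + u) - u| ≤ |x + u| + |u| := abs_sub _ _
  have h3 : (x + u) - u = x := by ring
  rw [h3] at h2; linarith
lemma inv_mul_bound (r x c b : ℝ) (hc : 0 < c) (hr : c ≤ r) (hx : |x| ≤ b) :
    |r⁻¹ * x| ≤ c⁻¹ * b := by
  have hr0 : 0 < r := lt_of_lt_of_le hc hr
  rw [abs_mul, abs_inv, abs_of_pos hr0]
  have h1 : r⁻¹ ≤ c⁻¹ := by gcongr
  have := abs_nonneg x
  nlinarith [inv_pos.mpr hr0]
lemma pos_of_sq_mul (A B : ℝ) (hA : 1 ≤ A) (h : (1:ℝ)/16 ≤ A * B) : 0 < B := by nlinarith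

end Helpers

set_option maxHeartbeats 3200000 in
/-- the approximate null frame lemma. -/
theorem approximate_null_frame :
    ∃ δ₀ : ℝ, 0 < δ₀ ∧ δ₀ < 1 ∧ ∃ C : ℝ, 1 ≤ C ∧
      ∀ ε : ℝ, 0 < ε → ε ≤ δ₀ →
      ∀ (X : Fin 4 → ℝ) (Y : Fin 2 → Fin 4 → ℝ),
        ((∃ α, (1:ℝ)/2 ≤ |X α|) ∧ (∀ α, |X α| ≤ 2)) →
        (∀ A : Fin 2, (∃ α, (1:ℝ)/2 ≤ |Y A α|) ∧ (∀ α, |Y A α| ≤ 2)) →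
        |mink X X| ≤ ε ^ 2 →
        (∀ A : Fin 2, |mink X (Y A)| ≤ ε) →
        (∀ A B : Fin 2, |mink (Y A) (Y B) - (if A = B then (1:ℝ) else 0)| ≤ δ₀) →
        ∃ (L Lb : Fin 4 → ℝ) (e : Fin 2 → Fin 4 → ℝ)
          (γ : ℝ) (cX : Fin 2 → ℝ) (c : Fin 2 → Fin 2 → ℝ),
          mink L L = 0 ∧ mink Lb Lb = 0 ∧ mink L Lb = -1 ∧
          (∀ A : Fin 2, mink L (e A) = 0 ∧ mink Lb (e A) = 0) ∧
          (∀ A B : Fin 2, mink (e A) (e B) = (if A = B then (1:ℝ) else 0)) ∧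
          X = L + cX 0 • e 0 + cX 1 • e 1 + γ • Lb ∧
          (∀ A : Fin 2, Y A = c A 0 • e 0 + c A 1 • e 1) ∧
          |γ| ≤ C * ε ^ 2 ∧ (∀ A : Fin 2, |cX A| ≤ C * ε) ∧
          (∀ A B : Fin 2, |c A B - (if A = B then (1:ℝ) else 0)| ≤ 1/2) := by
  refine ⟨1/1000, by norm_num, by norm_num, 10, by norm_num, ?_⟩
  intro ε hε hεδ X Y hX hY hXX hXY hYY
  have hε2 : ε^2 ≤ (1/1000:ℝ)^2 := sq_le_of_abs ε (1/1000) (by rw [abs_of_pos hε]; exact hεδ)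
  have hε2' : ((1:ℝ)/1000)^2 = 1/1000000 := by norm_num
  -- Gram matrix bounds
  have hg11b : |mink (Y 0) (Y 0) - 1| ≤ 1/1000 := by simpa using hYY 0 0
  have hg12b : |mink (Y 0) (Y 1)| ≤ 1/1000 := by simpa using hYY 0 1
  have hg22b : |mink (Y 1) (Y 1) - 1| ≤ 1/1000 := by simpa using hYY 1 1
  set g11 := mink (Y 0) (Y 0) with hg11def
  set g12 := mink (Y 0) (Y 1) with hg12def
  set g22 := mink (Y 1) (Y 1) with hg22def
  clear_value g11 g12 g22
  have hg11l : (999:ℝ)/1000 ≤ g11 := by linarith [(abs_le.mp hg11b).1]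
  have hg11u : g11 ≤ 1001/1000 := by linarith [(abs_le.mp hg11b).2]
  have hg12l : -(1/1000) ≤ g12 := (abs_le.mp hg12b).1
  have hg12u : g12 ≤ 1/1000 := (abs_le.mp hg12b).2
  have hg22l : (999:ℝ)/1000 ≤ g22 := by linarith [(abs_le.mp hg22b).1]
  have hg22u : g22 ≤ 1001/1000 := by linarith [(abs_le.mp hg22b).2]
  have hg11pos : 0 < g11 := by linarith
  -- first frame vector e1
  obtain ⟨r1, hr1pos, hr1sq⟩ : ∃ r, 0 < r ∧ r^2 = g11 :=
    ⟨Real.sqrt g11, Real.sqrt_pos.mpr hg11pos, Real.sq_sqrt hg11pos.le⟩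
  have hr1l : (99:ℝ)/100 ≤ r1 := by
    refine sqrt_lb r1 (99/100) hr1pos.le (by norm_num) ?_
    rw [hr1sq]
    have : ((99:ℝ)/100)^2 = 9801/10000 := by norm_num
    linarith
  have hr1u : r1 ≤ 1001/1000 := by
    refine sqrt_ub r1 (1001/1000) hr1pos.le (by norm_num) ?_
    rw [hr1sq]
    have : ((1001:ℝ)/1000)^2 = 1002001/1000000 := by norm_num
    linarith
  have hr1ne : r1 ≠ 0 := ne_of_gt hr1pos
  set e1 := r1⁻¹ • Y 0 with he1def
  have he1comp : ∀ α, e1 α = r1⁻¹ * Y 0 α := fun _ => rfl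
  clear_value e1
  have expandE1 : ∀ v, mink e1 v = r1⁻¹ * mink (Y 0) v := fun v => by
    rw [he1def, mink_smul_left]
  have he1e1 : mink e1 e1 = 1 := by
    rw [expandE1 e1, mink_comm (Y 0) e1, expandE1 (Y 0), ← hg11def, ← hr1sq]
    field_simp
  -- coefficient q
  set q := g12 / r1^2 with hqdef
  clear_value q
  have hqr : q * r1^2 = g12 := by rw [hqdef]; field_simp
  have hqg : q * g11 = g12 := by rw [← hr1sq]; exact hqr
  have hqb : |q| ≤ 1/900 := by
    rw [hqdef, abs_div, abs_of_pos (by positivity : (0:ℝ) < r1^2)]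
    rw [div_le_iff₀ (by positivity)]
    have h1 : (9:ℝ)/10 ≤ r1^2 := by rw [hr1sq]; linarith
    have h2 : |g12| ≤ 1/1000 := hg12b
    linarith
  have hql := (abs_le.mp hqb).1
  have hqu := (abs_le.mp hqb).2
  -- vector Z = Y1 - q Y0
  set Z := Y 1 - q • Y 0 with hZdef
  have hZcomp : ∀ α, Z α = Y 1 α - q * Y 0 α := fun _ => rfl
  clear_value Z
  have expandZ : ∀ v, mink Z v = mink (Y 1) v - q * mink (Y 0) v := fun v => by
    rw [hZdef, mink_sub_left, mink_smul_left]
  have hZY0 : mink Z (Y 0) = 0 := by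
    rw [expandZ (Y 0), mink_comm (Y 1) (Y 0), ← hg12def, ← hg11def]
    linarith
  have hZZval : mink Z Z = g22 - q * g12 := by
    rw [expandZ Z, mink_comm (Y 1) Z, expandZ (Y 1), mink_comm (Y 0) Z, hZY0,
      ← hg22def, ← hg12def]
    ring
  have hqg12 : |q * g12| ≤ (1/900) * (1/1000) := abs_mul_le' q g12 (1/900) (1/1000) hqb hg12b
  have hZZl : (99:ℝ)/100 ≤ mink Z Z := by
    rw [hZZval]; linarith [(abs_le.mp hqg12).2]
  have hZZu : mink Z Z ≤ 101/100 := by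
    rw [hZZval]; linarith [(abs_le.mp hqg12).1]
  have hZZpos : 0 < mink Z Z := by linarith
  obtain ⟨r2, hr2pos, hr2sq⟩ : ∃ r, 0 < r ∧ r^2 = mink Z Z :=
    ⟨Real.sqrt _, Real.sqrt_pos.mpr hZZpos, Real.sq_sqrt hZZpos.le⟩
  have hr2l : (99:ℝ)/100 ≤ r2 := by
    refine sqrt_lb r2 (99/100) hr2pos.le (by norm_num) ?_
    rw [hr2sq]
    have : ((99:ℝ)/100)^2 = 9801/10000 := by norm_num
    linarith
  have hr2u : r2 ≤ 101/100 := by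
    refine sqrt_ub r2 (101/100) hr2pos.le (by norm_num) ?_
    rw [hr2sq]
    have : ((101:ℝ)/100)^2 = 10201/10000 := by norm_num
    linarith
  have hr2ne : r2 ≠ 0 := ne_of_gt hr2pos
  -- second frame vector e2
  set e2 := r2⁻¹ • Z with he2def
  have he2comp : ∀ α, e2 α = r2⁻¹ * Z α := fun _ => rfl
  clear_value e2
  have expandE2 : ∀ v, mink e2 v = r2⁻¹ * mink Z v := fun v => by
    rw [he2def, mink_smul_left]
  have he2e2 : mink e2 e2 = 1 := by
    rw [expandE2 e2, mink_comm Z e2, expandE2 Z, ← hr2sq]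
    field_simp
  have he1e2 : mink e1 e2 = 0 := by
    rw [mink_comm, expandE2 e1, mink_comm Z e1, expandE1 Z, mink_comm (Y 0) Z, hZY0]
    ring
  have he2e1 : mink e2 e1 = 0 := by rw [mink_comm]; exact he1e2
  -- component bounds
  have hY0c : ∀ α, |Y 0 α| ≤ 2 := (hY 0).2
  have hY1c : ∀ α, |Y 1 α| ≤ 2 := (hY 1).2
  have he1c : ∀ α, |e1 α| ≤ 21/10 := by
    intro α
    rw [he1comp α]
    have := inv_mul_bound r1 (Y 0 α) (99/100) 2 (by norm_num) hr1l (hY0c α)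
    have h2 : ((99:ℝ)/100)⁻¹ * 2 = 200/99 := by norm_num
    linarith
  have hZc : ∀ α, |Z α| ≤ 201/100 := by
    intro α
    rw [hZcomp α]
    have h1 : |q * Y 0 α| ≤ (1/900) * 2 := abs_mul_le' q (Y 0 α) (1/900) 2 hqb (hY0c α)
    have h2 : |Y 1 α| - |q * Y 0 α| - |0| ≤ |Y 1 α - q * Y 0 α - 0| := tri2_lower _ _ _
    have h3 : |Y 1 α - q * Y 0 α| ≤ |Y 1 α| + |q * Y 0 α| := abs_sub _ _
    linarith [hY1c α, abs_nonneg (q * Y 0 α)]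
  have he2c : ∀ α, |e2 α| ≤ 21/10 := by
    intro α
    rw [he2comp α]
    have := inv_mul_bound r2 (Z α) (99/100) (201/100) (by norm_num) hr2l (hZc α)
    have h2 : ((99:ℝ)/100)⁻¹ * (201/100) = 201/99 := by norm_num
    linarith
  -- projection coefficients of X
  set cX1 := mink X e1 with hcX1def
  clear_value cX1
  have hcX1val : cX1 = r1⁻¹ * mink X (Y 0) := by
    rw [hcX1def, mink_comm X e1, expandE1 X, mink_comm (Y 0) X]
  have hcX1b : |cX1| ≤ 2*ε := by
    rw [hcX1val]
    have := inv_mul_bound r1 (mink X (Y 0)) (99/100) ε (by norm_num) hr1l (hXY 0)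
    have h2 : ((99:ℝ)/100)⁻¹ = 100/99 := by norm_num
    rw [h2] at this
    linarith
  set cX2 := mink X e2 with hcX2def
  clear_value cX2
  have hcX2val : cX2 = r2⁻¹ * (mink (Y 1) X - q * mink (Y 0) X) := by
    rw [hcX2def, mink_comm X e2, expandE2 X, expandZ X]
  have hcX2b : |cX2| ≤ 2*ε := by
    rw [hcX2val]
    have hXY1' : |mink (Y 1) X| ≤ ε := by rw [mink_comm]; exact hXY 1
    have hXY0' : |mink (Y 0) X| ≤ ε := by rw [mink_comm]; exact hXY 0
    have h1 : |q * mink (Y 0) X| ≤ (1/900) * ε := abs_mul_le' _ _ _ _ hqb hXY0'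
    have h3 : |mink (Y 1) X - q * mink (Y 0) X| ≤ |mink (Y 1) X| + |q * mink (Y 0) X| :=
      abs_sub _ _
    have h4 : |mink (Y 1) X - q * mink (Y 0) X| ≤ ε + (1/900) * ε := by linarith
    have := inv_mul_bound r2 (mink (Y 1) X - q * mink (Y 0) X) (99/100) (ε + (1/900)*ε)
      (by norm_num) hr2l h4
    have h2 : ((99:ℝ)/100)⁻¹ = 100/99 := by norm_num
    rw [h2] at this
    linarith
  -- the residual vector N
  set N := X - cX1 • e1 - cX2 • e2 with hNdef
  have hNcomp : ∀ α, N α = X α - cX1 * e1 α - cX2 * e2 α := fun _ => rfl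
  clear_value N
  have expandN : ∀ v, mink N v = mink X v - cX1 * mink e1 v - cX2 * mink e2 v := fun v => by
    rw [hNdef, mink_sub_left, mink_sub_left, mink_smul_left, mink_smul_left]
  have hNe1 : mink N e1 = 0 := by
    rw [expandN e1, ← hcX1def, he1e1, he2e1]; ring
  have hNe2 : mink N e2 = 0 := by
    rw [expandN e2, ← hcX2def, he1e2, he2e2]; ring
  have hNN : mink N N = mink X X - cX1^2 - cX2^2 := by
    rw [expandN N, mink_comm X N, expandN X, mink_comm e1 N, mink_comm e2 N, hNe1, hNe2,
      mink_comm e1 X, mink_comm e2 X, ← hcX1def, ← hcX2def]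
    ring
  set μ := mink N N with hμdef
  clear_value μ
  have hμb : |μ| ≤ 9*ε^2 := by
    rw [hNN]
    have h1 : cX1^2 ≤ (2*ε)^2 := sq_le_of_abs cX1 (2*ε) hcX1b
    have h2 : cX2^2 ≤ (2*ε)^2 := sq_le_of_abs cX2 (2*ε) hcX2b
    have h3 : (2*ε)^2 = 4*ε^2 := by ring
    have h4 := tri2_upper (mink X X) (cX1^2) (cX2^2)
    rw [abs_of_nonneg (sq_nonneg cX1), abs_of_nonneg (sq_nonneg cX2)] at h4
    linarith
  -- reference timelike vector
  set t0 : Fin 4 → ℝ := fun i => if i = 0 then 1 else 0 with ht0def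
  have ht00 : t0 0 = 1 := rfl
  have ht0c : ∀ α, |t0 α| ≤ 1 := by
    intro α
    rw [ht0def]
    dsimp only
    split <;> norm_num
  have ht0v : ∀ v, mink t0 v = -(v 0) := by
    intro v
    rw [mink_eq]
    have h0 : t0 0 = 1 := rfl
    have h1 : t0 1 = 0 := rfl
    have h2 : t0 2 = 0 := rfl
    have h3 : t0 3 = 0 := rfl
    rw [h0, h1, h2, h3]; ring
  set T' := t0 + e1 0 • e1 + e2 0 • e2 with hT'def
  have hT'comp : ∀ α, T' α = t0 α + e1 0 * e1 α + e2 0 * e2 α := fun _ => rfl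
  clear_value T'
  have expandT' : ∀ v, mink T' v = mink t0 v + e1 0 * mink e1 v + e2 0 * mink e2 v := fun v => by
    rw [hT'def, mink_add_left, mink_add_left, mink_smul_left, mink_smul_left]
  have hT'e1 : mink T' e1 = 0 := by
    rw [expandT' e1, ht0v e1, he1e1, he2e1]; ring
  have hT'e2 : mink T' e2 = 0 := by
    rw [expandT' e2, ht0v e2, he1e2, he2e2]; ring
  have hT'T' : mink T' T' = -(1 + (e1 0)^2 + (e2 0)^2) := by
    rw [expandT' T', ht0v T', mink_comm e1 T', mink_comm e2 T', hT'e1, hT'e2, hT'comp 0, ht00]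
    ring
  have hτ2pos : (0:ℝ) < 1 + (e1 0)^2 + (e2 0)^2 := by positivity
  obtain ⟨τ, hτpos, hτsq⟩ : ∃ τ, 0 < τ ∧ τ^2 = 1 + (e1 0)^2 + (e2 0)^2 :=
    ⟨Real.sqrt _, Real.sqrt_pos.mpr hτ2pos, Real.sq_sqrt hτ2pos.le⟩
  have hτ1 : 1 ≤ τ := by
    refine sqrt_lb τ 1 hτpos.le (by norm_num) ?_
    rw [hτsq]
    have := sq_nonneg (e1 0); have := sq_nonneg (e2 0)
    norm_num
    linarith
  have hτne : τ ≠ 0 := ne_of_gt hτpos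
  set T := τ⁻¹ • T' with hTdef
  have hTcomp : ∀ α, T α = τ⁻¹ * T' α := fun _ => rfl
  clear_value T
  have expandT : ∀ v, mink T v = τ⁻¹ * mink T' v := fun v => by
    rw [hTdef, mink_smul_left]
  have hTe1 : mink T e1 = 0 := by rw [expandT e1, hT'e1]; ring
  have hTe2 : mink T e2 = 0 := by rw [expandT e2, hT'e2]; ring
  have hTT : mink T T = -1 := by
    rw [expandT T, mink_comm T' T, expandT T', hT'T', ← hτsq]
    field_simp
  have hT'c : ∀ α, |T' α| ≤ 10 := by
    intro α
    rw [hT'comp α]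
    have h1 : |e1 0 * e1 α| ≤ (21/10) * (21/10) :=
      abs_mul_le' _ _ _ _ (he1c 0) (he1c α)
    have h2 : |e2 0 * e2 α| ≤ (21/10) * (21/10) :=
      abs_mul_le' _ _ _ _ (he2c 0) (he2c α)
    have h3 := tri2_upper' (t0 α) (e1 0 * e1 α) (e2 0 * e2 α)
    linarith [ht0c α]
  have hTc : ∀ α, |T α| ≤ 10 := by
    intro α
    rw [hTcomp α]
    have := inv_mul_bound τ (T' α) 1 10 one_pos hτ1 (hT'c α)
    norm_num at this
    rw [abs_mul, abs_inv]; linarith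
  -- decompose N in the orthogonal Lorentzian plane
  set t := mink N T with htdef
  clear_value t
  set S' := N + t • T with hS'def
  have hS'comp : ∀ α, S' α = N α + t * T α := fun _ => rfl
  clear_value S'
  have expandS' : ∀ v, mink S' v = mink N v + t * mink T v := fun v => by
    rw [hS'def, mink_add_left, mink_smul_left]
  have hS'e1 : mink S' e1 = 0 := by rw [expandS' e1, hNe1, hTe1]; ring
  have hS'e2 : mink S' e2 = 0 := by rw [expandS' e2, hNe2, hTe2]; ring
  have hS'T : mink S' T = 0 := by
    rw [expandS' T, ← htdef, hTT]; ring
  have hS'S' : mink S' S' = μ + t^2 := by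
    rw [expandS' S', mink_comm N S', expandS' N, mink_comm T S', hS'T, mink_comm T N,
      ← htdef, ← hμdef]
    ring
  -- positivity of μ + t²
  have hTTc : -(T 0 * T 0) + T 1 * T 1 + T 2 * T 2 + T 3 * T 3 = -1 := by
    rw [← mink_eq]; exact hTT
  have hoC : -(S' 0 * T 0) + S' 1 * T 1 + S' 2 * T 2 + S' 3 * T 3 = 0 := by
    rw [← mink_eq]; exact hS'T
  have hqSS : -(S' 0 * S' 0) + S' 1 * S' 1 + S' 2 * S' 2 + S' 3 * S' 3 = μ + t^2 := by
    rw [← mink_eq]; exact hS'S'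
  have key := aux_spacelike (T 0) (T 1) (T 2) (T 3) (S' 0) (S' 1) (S' 2) (S' 3) hTTc hoC
  have hT0sq : 1 ≤ T 0 ^ 2 := by
    have h1 : T 0 ^2 = T 0 * T 0 := by ring
    rw [h1]
    linarith [mul_self_nonneg (T 1), mul_self_nonneg (T 2), mul_self_nonneg (T 3)]
  have hpos : 0 < μ + t^2 := by
    rcases le_or_gt |t| (1/80) with hts | htb
    · obtain ⟨α, hXα⟩ := hX.1
      have hNα : 49/100 ≤ |N α| := by
        have h1 := tri2_lower (X α) (cX1 * e1 α) (cX2 * e2 α)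
        rw [← hNcomp α] at h1
        have h2 : |cX1 * e1 α| ≤ (2*ε) * (21/10) := abs_mul_le' _ _ _ _ hcX1b (he1c α)
        have h3 : |cX2 * e2 α| ≤ (2*ε) * (21/10) := abs_mul_le' _ _ _ _ hcX2b (he2c α)
        have h4 : ε ≤ 1/1000 := hεδ
        linarith
      have hS'α : 1/4 ≤ |S' α| := by
        have h1 := tri1_lower (N α) (t * T α)
        rw [← hS'comp α] at h1
        have h2 : |t * T α| ≤ (1/80) * 10 := abs_mul_le' _ _ _ _ hts (hTc α)
        linarith
      have hS'α2 : (1/16:ℝ) ≤ (S' α)^2 := by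
        have := sq_ge_of_abs (S' α) (1/4) (by norm_num) hS'α
        have h116 : ((1:ℝ)/4)^2 = 1/16 := by norm_num
        linarith
      have hsum : (1/16:ℝ) ≤ S' 1 ^2 + S' 2 ^2 + S' 3 ^2 := by
        obtain rfl | rfl | rfl | rfl : α = 0 ∨ α = 1 ∨ α = 2 ∨ α = 3 := by omega
        · linarith [key.2]
        · linarith [sq_nonneg (S' 2), sq_nonneg (S' 3)]
        · linarith [sq_nonneg (S' 1), sq_nonneg (S' 3)]
        · linarith [sq_nonneg (S' 1), sq_nonneg (S' 2)]
      have hkey1 := key.1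
      rw [hqSS] at hkey1
      exact pos_of_sq_mul (T 0 ^2) (μ + t^2) hT0sq (by linarith)
    · have h1 : ((1:ℝ)/80)^2 ≤ |t|^2 := pow_le_pow_left₀ (by norm_num) htb.le 2
      rw [sq_abs] at h1
      have h2 : ((1:ℝ)/80)^2 = 1/6400 := by norm_num
      have h3 := (abs_le.mp hμb).1
      linarith
  obtain ⟨s, hspos, hssq⟩ : ∃ s, 0 < s ∧ s^2 = μ + t^2 :=
    ⟨Real.sqrt _, Real.sqrt_pos.mpr hpos, Real.sq_sqrt hpos.le⟩
  have hsne : s ≠ 0 := ne_of_gt hspos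
  set S := s⁻¹ • S' with hSdef
  have hScomp : ∀ α, S α = s⁻¹ * S' α := fun _ => rfl
  clear_value S
  have expandS : ∀ v, mink S v = s⁻¹ * mink S' v := fun v => by
    rw [hSdef, mink_smul_left]
  have hSe1 : mink S e1 = 0 := by rw [expandS e1, hS'e1]; ring
  have hSe2 : mink S e2 = 0 := by rw [expandS e2, hS'e2]; ring
  have hST : mink S T = 0 := by rw [expandS T, hS'T]; ring
  have hTS : mink T S = 0 := by rw [mink_comm]; exact hST
  have hSS : mink S S = 1 := by
    rw [expandS S, mink_comm S' S, expandS S', hS'S', ← hssq]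
    field_simp
  -- null pair
  set Pp := T + S with hPpdef
  have hPpcomp : ∀ α, Pp α = T α + S α := fun _ => rfl
  clear_value Pp
  have expandPp : ∀ v, mink Pp v = mink T v + mink S v := fun v => by
    rw [hPpdef, mink_add_left]
  set Pm := T - S with hPmdef
  have hPmcomp : ∀ α, Pm α = T α - S α := fun _ => rfl
  clear_value Pm
  have expandPm : ∀ v, mink Pm v = mink T v - mink S v := fun v => by
    rw [hPmdef, mink_sub_left]
  have hPpe1 : mink Pp e1 = 0 := by rw [expandPp e1, hTe1, hSe1]; ring
  have hPpe2 : mink Pp e2 = 0 := by rw [expandPp e2, hTe2, hSe2]; ring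
  have hPme1 : mink Pm e1 = 0 := by rw [expandPm e1, hTe1, hSe1]; ring
  have hPme2 : mink Pm e2 = 0 := by rw [expandPm e2, hTe2, hSe2]; ring
  have hPpT : mink Pp T = -1 := by rw [expandPp T, hTT, hST]; ring
  have hPpS : mink Pp S = 1 := by rw [expandPp S, hTS, hSS]; ring
  have hPmT : mink Pm T = -1 := by rw [expandPm T, hTT, hST]; ring
  have hPmS : mink Pm S = -1 := by rw [expandPm S, hTS, hSS]; ring
  have hPpPp : mink Pp Pp = 0 := by
    rw [expandPp Pp, mink_comm T Pp, mink_comm S Pp, hPpT, hPpS]; ring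
  have hPmPm : mink Pm Pm = 0 := by
    rw [expandPm Pm, mink_comm T Pm, mink_comm S Pm, hPmT, hPmS]; ring
  have hPpPm : mink Pp Pm = -2 := by
    rw [expandPp Pm, mink_comm T Pm, mink_comm S Pm, hPmT, hPmS]; ring
  have hPmPp : mink Pm Pp = -2 := by rw [mink_comm]; exact hPpPm
  -- decomposition of N
  have hNeq : ∀ α, N α = ((s-t)/2) * Pp α + (-(s+t)/2) * Pm α := by
    intro α
    rw [hPpcomp α, hPmcomp α, hScomp α, hS'comp α]
    field_simp [hsne]
    ring
  have hμeq : μ = s^2 - t^2 := by linarith [hssq]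
  have hγb : |(-μ/2)| ≤ 10 * ε^2 := by
    have h1 : |(-μ/2)| = |μ|/2 := by rw [abs_div, abs_neg]; norm_num
    rw [h1]
    linarith [sq_nonneg ε]
  -- coefficient bounds for c
  have hc00 : |r1 - 1| ≤ 1/2 := abs_le.mpr ⟨by linarith, by linarith⟩
  have hc11 : |r2 - 1| ≤ 1/2 := abs_le.mpr ⟨by linarith, by linarith⟩
  have hc10 : |q * r1| ≤ 1/2 := by
    have h1 : |q * r1| ≤ (1/900) * (1001/1000) :=
      abs_mul_le' q r1 (1/900) (1001/1000) hqb (by rw [abs_of_pos hr1pos]; exact hr1u)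
    linarith
  -- Y decomposition (shared by both branches)
  have hYdec : ∀ A : Fin 2, Y A =
      (![![r1, 0], ![q*r1, r2]] : Fin 2 → Fin 2 → ℝ) A 0 • e1 +
      (![![r1, 0], ![q*r1, r2]] : Fin 2 → Fin 2 → ℝ) A 1 • e2 := by
    intro A
    fin_cases A
    · simp only [Fin.zero_eta, Fin.mk_one, Fin.isValue, Matrix.cons_val_zero, Matrix.cons_val_one, Matrix.head_cons]
      funext α
      simp only [Pi.add_apply, Pi.smul_apply, smul_eq_mul]
      rw [he1comp α, he2comp α]
      field_simp
      ring
    · simp only [Fin.zero_eta, Fin.mk_one, Fin.isValue, Matrix.cons_val_zero, Matrix.cons_val_one, Matrix.head_cons]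
      funext α
      simp only [Pi.add_apply, Pi.smul_apply, smul_eq_mul]
      rw [he1comp α, he2comp α, hZcomp α]
      field_simp
      ring
  have hcXbnd : ∀ A : Fin 2, |(![cX1, cX2] : Fin 2 → ℝ) A| ≤ 10 * ε := by
    intro A
    fin_cases A
    · simp only [Fin.zero_eta, Fin.isValue, Matrix.cons_val_zero]; linarith
    · simp only [Fin.mk_one, Fin.isValue, Matrix.cons_val_one, Matrix.head_cons, Matrix.cons_val_zero]; linarith
  have hcbnd : ∀ A B : Fin 2,
      |(![![r1, 0], ![q*r1, r2]] : Fin 2 → Fin 2 → ℝ) A B - (if A = B then (1:ℝ) else 0)|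
        ≤ 1/2 := by
    intro A B
    fin_cases A <;> fin_cases B <;>
      simp only [Fin.zero_eta, Fin.mk_one, Fin.isValue, Matrix.cons_val_zero, Matrix.cons_val_one, Matrix.head_cons] <;> norm_num
    · exact hc00
    · simpa [abs_mul] using hc10
    · exact hc11
  have horth : ∀ A B : Fin 2, mink ((![e1, e2] : Fin 2 → Fin 4 → ℝ) A)
      ((![e1, e2] : Fin 2 → Fin 4 → ℝ) B) = (if A = B then (1:ℝ) else 0) := by
    intro A B
    fin_cases A <;> fin_cases B <;>
      simp only [Fin.zero_eta, Fin.mk_one, Fin.isValue, Matrix.cons_val_zero, Matrix.cons_val_one, Matrix.head_cons]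
    · simpa using he1e1
    · simpa using he1e2
    · simpa using he2e1
    · simpa using he2e2
  by_cases hst : s - t = 0
  · -- degenerate branch : s = t, μ = 0
    have hteq : t = s := by linarith
    have hμ0 : μ = 0 := by rw [hμeq, hteq]; ring
    have hsum_pos : 0 < s + t := by rw [hteq]; linarith
    have hsum_ne : -(s+t) ≠ 0 := by
      intro h; have : s + t = 0 := by linarith [neg_eq_zero.mp h]
      linarith
    refine ⟨(-(s+t)/2) • Pm, (-(s+t))⁻¹ • Pp, ![e1, e2], -μ/2, ![cX1, cX2],
      ![![r1, 0], ![q*r1, r2]], ?_, ?_, ?_, ?_, horth, ?_, hYdec, hγb, hcXbnd, hcbnd⟩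
    · rw [mink_smul_left, mink_smul_right, hPmPm]; ring
    · rw [mink_smul_left, mink_smul_right, hPpPp]; ring
    · rw [mink_smul_left, mink_smul_right, hPmPp]
      have h2 : (-(s+t)) * (-(s+t))⁻¹ = 1 := mul_inv_cancel₀ hsum_ne
      linear_combination (-1 : ℝ) * h2
    · intro A
      fin_cases A
      · simp only [Fin.zero_eta, Fin.isValue, Matrix.cons_val_zero]
        exact ⟨by rw [mink_smul_left, hPme1]; ring, by rw [mink_smul_left, hPpe1]; ring⟩
      · simp only [Fin.mk_one, Fin.isValue, Matrix.cons_val_one, Matrix.head_cons, Matrix.cons_val_zero]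
        exact ⟨by rw [mink_smul_left, hPme2]; ring, by rw [mink_smul_left, hPpe2]; ring⟩
    · -- X decomposition
      simp only [Fin.zero_eta, Fin.mk_one, Fin.isValue, Matrix.cons_val_zero, Matrix.cons_val_one, Matrix.head_cons]
      funext α
      simp only [Pi.add_apply, Pi.smul_apply, smul_eq_mul]
      have hN := hNeq α
      have hNc := hNcomp α
      have h0 : (s-t)/2 * Pp α = 0 := by rw [hst]; ring
      have hlast : -μ/2 * ((-(s+t))⁻¹ * Pp α) = 0 := by rw [hμ0]; ring
      linarith
  · -- main branch
    refine ⟨((s-t)/2) • Pp, (s-t)⁻¹ • Pm, ![e1, e2], -μ/2, ![cX1, cX2],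
      ![![r1, 0], ![q*r1, r2]], ?_, ?_, ?_, ?_, horth, ?_, hYdec, hγb, hcXbnd, hcbnd⟩
    · rw [mink_smul_left, mink_smul_right, hPpPp]; ring
    · rw [mink_smul_left, mink_smul_right, hPmPm]; ring
    · rw [mink_smul_left, mink_smul_right, hPpPm]
      have h2 : (s-t) * (s-t)⁻¹ = 1 := mul_inv_cancel₀ hst
      linear_combination (-1 : ℝ) * h2
    · intro A
      fin_cases A
      · simp only [Fin.zero_eta, Fin.isValue, Matrix.cons_val_zero]
        exact ⟨by rw [mink_smul_left, hPpe1]; ring, by rw [mink_smul_left, hPme1]; ring⟩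
      · simp only [Fin.mk_one, Fin.isValue, Matrix.cons_val_one, Matrix.head_cons, Matrix.cons_val_zero]
        exact ⟨by rw [mink_smul_left, hPpe2]; ring, by rw [mink_smul_left, hPme2]; ring⟩
    · -- X decomposition
      simp only [Fin.zero_eta, Fin.mk_one, Fin.isValue, Matrix.cons_val_zero, Matrix.cons_val_one, Matrix.head_cons]
      funext α
      simp only [Pi.add_apply, Pi.smul_apply, smul_eq_mul]
      have hN := hNeq α
      have hNc := hNcomp α
      have hkey : -μ/2 * ((s-t)⁻¹ * Pm α) = (-(s+t)/2) * Pm α := by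
        rw [hμeq]
        field_simp [hst]
        ring
      linarith
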